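/- Let H be a Hopf algebra and F ∈ H⊗H a 2-cocycle twist (invertible, satisfying F₁₂(Δ⊗id)(F) = F₂₃(id⊗Δ)(F) and (ε⊗id)(F) = 1 = (id⊗ε)(F)). Then H^F := (H, μ, Δ^F, S^F, ε) with Δ^F(ξ) = F Δ(ξ) F⁻¹ and S^F(ξ) = χ S(ξ) χ⁻¹, where χ = f^α S(f_α) for F = f^α ⊗ f_α, is again a Hopf algebra. -/

import Mathlib

/-!
STATEMENT 0: If `F` is a 2-cocycle twist of a Hopf algebra `H`, then
`H^F = (H, μ, Δ^F, S^F, ε)` with `Δ^F(ξ) = F Δ(ξ) F⁻¹` and `S^F(ξ) = χ S(ξ) χ⁻¹`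
is again a Hopf algebra.
-/

open TensorProduct

noncomputable section

variable (K : Type*) [CommRing K] (H : Type*) [Ring H] [HopfAlgebra K H]

namespace TwistPaper

/-- Multiplication of `H` as a linear map `H ⊗ H → H`. -/
def muH : H ⊗[K] H →ₗ[K] H := LinearMap.mul' K H

/-- The coproduct of `H`. -/
def ΔH : H →ₗ[K] H ⊗[K] H := Coalgebra.comul

/-- The counit of `H`. -/
def εH : H →ₗ[K] K := Coalgebra.counit

/-- The antipode of `H`. -/
def SH : H →ₗ[K] H := HopfAlgebra.antipode (R := K)

/-- `x ⊗ y ↦ x ⊗ (y ⊗ 1)`, i.e. `F ↦ F₁₂` inside `H ⊗ H ⊗ H`. -/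
def ins3 : H ⊗[K] H →ₗ[K] H ⊗[K] (H ⊗[K] H) :=
  LinearMap.lTensor H ((TensorProduct.mk K H H).flip 1)

/-- `F ↦ F₂₃ = 1 ⊗ F`. -/
def ins1 : H ⊗[K] H →ₗ[K] H ⊗[K] (H ⊗[K] H) :=
  TensorProduct.mk K H (H ⊗[K] H) 1

/-- `(Δ ⊗ id)` as a map `H ⊗ H → H ⊗ (H ⊗ H)`. -/
def comulLeft : H ⊗[K] H →ₗ[K] H ⊗[K] (H ⊗[K] H) :=
  (TensorProduct.assoc K H H H).toLinearMap ∘ₗ (ΔH K H).rTensor H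

/-- `(id ⊗ Δ)` as a map `H ⊗ H → H ⊗ (H ⊗ H)`. -/
def comulRight : H ⊗[K] H →ₗ[K] H ⊗[K] (H ⊗[K] H) :=
  (ΔH K H).lTensor H

/-- `(ε ⊗ id) : H ⊗ H → H`. -/
def counitLeft : H ⊗[K] H →ₗ[K] H :=
  (TensorProduct.lid K H).toLinearMap ∘ₗ (εH K H).rTensor H

/-- `(id ⊗ ε) : H ⊗ H → H`. -/
def counitRight : H ⊗[K] H →ₗ[K] H :=
  (TensorProduct.rid K H).toLinearMap ∘ₗ (εH K H).lTensor H

/-- `χ = f^α S(f_α)` for `F = f^α ⊗ f_α`. -/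
def chi (F : H ⊗[K] H) : H := muH K H ((SH K H).lTensor H F)

/-- `χ⁻¹ = S(f̄^α) f̄_α` for `F⁻¹ = f̄^α ⊗ f̄_α`. -/
def chiInv (Finv : H ⊗[K] H) : H := muH K H ((SH K H).rTensor H Finv)

/-- `F` is a twist of the Hopf algebra `H` with inverse `Finv`:
it is invertible, satisfies the 2-cocycle condition
`F₁₂ (Δ⊗id)(F) = F₂₃ (id⊗Δ)(F)` and the normalization
`(ε⊗id)(F) = 1 = (id⊗ε)(F)`. -/
structure IsTwist (F Finv : H ⊗[K] H) : Prop where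
  mul_inv : F * Finv = 1
  inv_mul : Finv * F = 1
  cocycle : ins3 K H F * comulLeft K H F = ins1 K H F * comulRight K H F
  counit_left : counitLeft K H F = 1
  counit_right : counitRight K H F = 1

/-- The twisted coproduct `Δ^F(ξ) = F Δ(ξ) F⁻¹`. -/
def twistComul (F Finv : H ⊗[K] H) : H →ₗ[K] H ⊗[K] H :=
  LinearMap.mulLeft K F ∘ₗ LinearMap.mulRight K Finv ∘ₗ ΔH K H

/-- The twisted antipode `S^F(ξ) = χ S(ξ) χ⁻¹`. -/
def twistAntipode (F Finv : H ⊗[K] H) : H →ₗ[K] H :=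
  LinearMap.mulLeft K (chi K H F) ∘ₗ LinearMap.mulRight K (chiInv K H Finv) ∘ₗ SH K H

set_option synthInstance.maxHeartbeats 1000000
set_option maxHeartbeats 2000000

section AntipodeAntihom
variable {R : Type*} [CommRing R] {A : Type*} [Ring A] [HopfAlgebra R A]

open Coalgebra LinearMap

/-- comultiplication on `A ⊗ A` -/
def deltaC : A ⊗[R] A →ₗ[R] (A ⊗[R] A) ⊗[R] (A ⊗[R] A) :=
  (TensorProduct.tensorTensorTensorComm R A A A A).toLinearMap ∘ₗ
    TensorProduct.map Coalgebra.comul Coalgebra.comul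

lemma deltaC_tmul (a b : A) :
    deltaC (R := R) (a ⊗ₜ b) = TensorProduct.tensorTensorTensorComm R A A A A
      (Coalgebra.comul a ⊗ₜ Coalgebra.comul b) := by
  simp [deltaC]

/-- counit on `A ⊗ A` -/
def epsC : A ⊗[R] A →ₗ[R] R := Coalgebra.counit ∘ₗ LinearMap.mul' R A

/-- convolution product on maps `A ⊗ A → A` -/
def conv (f g : A ⊗[R] A →ₗ[R] A) : A ⊗[R] A →ₗ[R] A :=
  LinearMap.mul' R A ∘ₗ TensorProduct.map f g ∘ₗ deltaC

lemma conv_apply (f g : A ⊗[R] A →ₗ[R] A) (w : A ⊗[R] A) :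
    conv f g w = LinearMap.mul' R A (TensorProduct.map f g (deltaC w)) := rfl

def convUnit : A ⊗[R] A →ₗ[R] A := Algebra.linearMap R A ∘ₗ epsC

lemma convUnit_tmul (a b : A) :
    convUnit (R := R) (a ⊗ₜ b) = algebraMap R A (Coalgebra.counit (a * b)) := rfl

lemma conv_unit_right (f : A ⊗[R] A →ₗ[R] A) : conv f convUnit = f := by
  apply TensorProduct.ext'
  intro a b
  have bridge : ∀ (p q : A ⊗[R] A),
      LinearMap.mul' R A (TensorProduct.map f convUnit
        (TensorProduct.tensorTensorTensorComm R A A A A (p ⊗ₜ q)))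
      = f (TensorProduct.map (TensorProduct.rid R A).toLinearMap
            (TensorProduct.rid R A).toLinearMap
          ((Coalgebra.counit.lTensor A p) ⊗ₜ (Coalgebra.counit.lTensor A q))) := by
    intro p q
    induction p using TensorProduct.induction_on with
    | zero => simp
    | add p₁ p₂ h₁ h₂ => simp [add_tmul, h₁, h₂]
    | tmul x y =>
      induction q using TensorProduct.induction_on with
      | zero => simp
      | add q₁ q₂ h₁ h₂ => simp [tmul_add, h₁, h₂]
      | tmul z w =>
        simp only [tensorTensorTensorComm_tmul, TensorProduct.map_tmul,
          LinearMap.mul'_apply, convUnit_tmul, LinearMap.lTensor_tmul,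
          LinearEquiv.coe_coe, TensorProduct.rid_tmul]
        rw [Bialgebra.counit_mul, TensorProduct.tmul_smul, ← TensorProduct.smul_tmul',
          map_smul, map_smul, smul_smul, Algebra.smul_def, ← Algebra.commutes,
          mul_comm (Coalgebra.counit w) (Coalgebra.counit y)]
  rw [conv_apply, deltaC_tmul, bridge, Coalgebra.lTensor_counit_comul,
    Coalgebra.lTensor_counit_comul]
  simp

lemma conv_unit_left (f : A ⊗[R] A →ₗ[R] A) : conv convUnit f = f := by
  apply TensorProduct.ext'
  intro a b
  have bridge : ∀ (p q : A ⊗[R] A),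
      LinearMap.mul' R A (TensorProduct.map convUnit f
        (TensorProduct.tensorTensorTensorComm R A A A A (p ⊗ₜ q)))
      = f (TensorProduct.map (TensorProduct.lid R A).toLinearMap
            (TensorProduct.lid R A).toLinearMap
          ((Coalgebra.counit.rTensor A p) ⊗ₜ (Coalgebra.counit.rTensor A q))) := by
    intro p q
    induction p using TensorProduct.induction_on with
    | zero => simp
    | add p₁ p₂ h₁ h₂ => simp [add_tmul, h₁, h₂]
    | tmul x y =>
      induction q using TensorProduct.induction_on with
      | zero => simp
      | add q₁ q₂ h₁ h₂ => simp [tmul_add, h₁, h₂]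
      | tmul z w =>
        simp only [tensorTensorTensorComm_tmul, TensorProduct.map_tmul,
          LinearMap.mul'_apply, convUnit_tmul, LinearMap.rTensor_tmul,
          LinearEquiv.coe_coe, TensorProduct.lid_tmul]
        rw [Bialgebra.counit_mul, TensorProduct.tmul_smul, ← TensorProduct.smul_tmul',
          map_smul, map_smul, smul_smul, Algebra.smul_def,
          mul_comm (Coalgebra.counit z) (Coalgebra.counit x)]
  rw [conv_apply, deltaC_tmul, bridge, Coalgebra.rTensor_counit_comul,
    Coalgebra.rTensor_counit_comul]
  simp

/-- shuffle for the left-associated double coproduct -/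
def phiL : ((A ⊗[R] A) ⊗[R] A) ⊗[R] ((A ⊗[R] A) ⊗[R] A) →ₗ[R]
    (A ⊗[R] A) ⊗[R] ((A ⊗[R] A) ⊗[R] (A ⊗[R] A)) :=
  (LinearMap.lTensor (A ⊗[R] A)
      (TensorProduct.tensorTensorTensorComm R A A A A).toLinearMap) ∘ₗ
    (TensorProduct.tensorTensorTensorComm R A (A ⊗[R] A) A (A ⊗[R] A)).toLinearMap ∘ₗ
    TensorProduct.map (TensorProduct.assoc R A A A).toLinearMap
      (TensorProduct.assoc R A A A).toLinearMap

/-- shuffle for the right-associated double coproduct -/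
def phiR : (A ⊗[R] (A ⊗[R] A)) ⊗[R] (A ⊗[R] (A ⊗[R] A)) →ₗ[R]
    (A ⊗[R] A) ⊗[R] ((A ⊗[R] A) ⊗[R] (A ⊗[R] A)) :=
  (LinearMap.lTensor (A ⊗[R] A)
      (TensorProduct.tensorTensorTensorComm R A A A A).toLinearMap) ∘ₗ
    (TensorProduct.tensorTensorTensorComm R A (A ⊗[R] A) A (A ⊗[R] A)).toLinearMap

lemma phiL_phiR (P Q : A ⊗[R] (A ⊗[R] A)) :
    phiL (((TensorProduct.assoc R A A A).symm P) ⊗ₜ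
      ((TensorProduct.assoc R A A A).symm Q)) = phiR (P ⊗ₜ Q) := by
  induction P using TensorProduct.induction_on with
  | zero => simp
  | add p₁ p₂ h₁ h₂ => simp only [map_add, add_tmul, h₁, h₂]
  | tmul x m =>
    induction Q using TensorProduct.induction_on with
    | zero => simp
    | add q₁ q₂ h₁ h₂ => simp only [map_add, tmul_add, h₁, h₂]
    | tmul z n =>
      induction m using TensorProduct.induction_on with
      | zero => simp
      | add m₁ m₂ h₁ h₂ => simp only [map_add, tmul_add, add_tmul, h₁, h₂]
      | tmul y₁ y₂ =>
        induction n using TensorProduct.induction_on with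
        | zero => simp
        | add n₁ n₂ h₁ h₂ => simp only [map_add, tmul_add, add_tmul, h₁, h₂]
        | tmul w₁ w₂ => simp [phiL, phiR]

lemma bridgeL (u v : A ⊗[R] A) :
    (TensorProduct.assoc R (A ⊗[R] A) (A ⊗[R] A) (A ⊗[R] A))
      ((deltaC (R := R)).rTensor (A ⊗[R] A)
        (TensorProduct.tensorTensorTensorComm R A A A A (u ⊗ₜ v)))
    = phiL ((Coalgebra.comul.rTensor A u) ⊗ₜ (Coalgebra.comul.rTensor A v)) := by
  have inner : ∀ (p q : A ⊗[R] A) (y w : A),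
      (TensorProduct.assoc R (A ⊗[R] A) (A ⊗[R] A) (A ⊗[R] A))
        ((TensorProduct.tensorTensorTensorComm R A A A A (p ⊗ₜ q)) ⊗ₜ (y ⊗ₜ w))
      = phiL ((p ⊗ₜ y) ⊗ₜ (q ⊗ₜ w)) := by
    intro p q y w
    induction p using TensorProduct.induction_on with
    | zero => simp
    | add p₁ p₂ h₁ h₂ => simp only [map_add, add_tmul, tmul_add, h₁, h₂]
    | tmul x₁ x₂ =>
      induction q using TensorProduct.induction_on with
      | zero => simp
      | add q₁ q₂ h₁ h₂ => simp only [map_add, add_tmul, tmul_add, h₁, h₂]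
      | tmul z₁ z₂ => simp [phiL]
  induction u using TensorProduct.induction_on with
  | zero => simp
  | add u₁ u₂ h₁ h₂ => simp only [map_add, add_tmul, tmul_add, h₁, h₂]
  | tmul x y =>
    induction v using TensorProduct.induction_on with
    | zero => simp
    | add v₁ v₂ h₁ h₂ => simp only [map_add, add_tmul, tmul_add, h₁, h₂]
    | tmul z w =>
      simp only [tensorTensorTensorComm_tmul, LinearMap.rTensor_tmul, deltaC_tmul]
      exact inner _ _ y w

lemma bridgeR (u v : A ⊗[R] A) :
    (deltaC (R := R)).lTensor (A ⊗[R] A)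
        (TensorProduct.tensorTensorTensorComm R A A A A (u ⊗ₜ v))
    = phiR ((Coalgebra.comul.lTensor A u) ⊗ₜ (Coalgebra.comul.lTensor A v)) := by
  have inner : ∀ (p q : A ⊗[R] A) (x z : A),
      (x ⊗ₜ[R] z) ⊗ₜ (TensorProduct.tensorTensorTensorComm R A A A A (p ⊗ₜ q))
      = phiR ((x ⊗ₜ p) ⊗ₜ (z ⊗ₜ q)) := by
    intro p q x z
    induction p using TensorProduct.induction_on with
    | zero => simp
    | add p₁ p₂ h₁ h₂ => simp only [map_add, add_tmul, tmul_add, h₁, h₂]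
    | tmul y₁ y₂ =>
      induction q using TensorProduct.induction_on with
      | zero => simp
      | add q₁ q₂ h₁ h₂ => simp only [map_add, add_tmul, tmul_add, h₁, h₂]
      | tmul w₁ w₂ => simp [phiR]
  induction u using TensorProduct.induction_on with
  | zero => simp
  | add u₁ u₂ h₁ h₂ => simp only [map_add, add_tmul, tmul_add, h₁, h₂]
  | tmul x y =>
    induction v using TensorProduct.induction_on with
    | zero => simp
    | add v₁ v₂ h₁ h₂ => simp only [map_add, add_tmul, tmul_add, h₁, h₂]
    | tmul z w =>
      simp only [tensorTensorTensorComm_tmul, LinearMap.lTensor_tmul, deltaC_tmul]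
      exact inner _ _ x z

lemma coassocC (w : A ⊗[R] A) :
    (TensorProduct.assoc R (A ⊗[R] A) (A ⊗[R] A) (A ⊗[R] A))
      ((deltaC (R := R)).rTensor (A ⊗[R] A) (deltaC w))
    = (deltaC (R := R)).lTensor (A ⊗[R] A) (deltaC w) := by
  induction w using TensorProduct.induction_on with
  | zero => simp
  | add w₁ w₂ h₁ h₂ => simp only [map_add, h₁, h₂]
  | tmul a b =>
    rw [deltaC_tmul, bridgeL, bridgeR, ← Coalgebra.coassoc_symm_apply (R := R) (a := a),
      ← Coalgebra.coassoc_symm_apply (R := R) (a := b), phiL_phiR]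

lemma conv_assoc (f g h : A ⊗[R] A →ₗ[R] A) :
    conv (conv f g) h = conv f (conv g h) := by
  have outerL : ∀ W : (A ⊗[R] A) ⊗[R] (A ⊗[R] A),
      LinearMap.mul' R A (TensorProduct.map (conv f g) h W)
      = LinearMap.mul' R A ((LinearMap.mul' R A).rTensor A
          (TensorProduct.map (TensorProduct.map f g) h
            ((deltaC (R := R)).rTensor (A ⊗[R] A) W))) := by
    intro W
    induction W using TensorProduct.induction_on with
    | zero => simp
    | add w₁ w₂ h₁ h₂ => simp only [map_add, h₁, h₂]
    | tmul u v =>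
      simp only [TensorProduct.map_tmul, LinearMap.rTensor_tmul, conv_apply]
  have outerR : ∀ W : (A ⊗[R] A) ⊗[R] (A ⊗[R] A),
      LinearMap.mul' R A (TensorProduct.map f (conv g h) W)
      = LinearMap.mul' R A ((LinearMap.mul' R A).lTensor A
          (TensorProduct.map f (TensorProduct.map g h)
            ((deltaC (R := R)).lTensor (A ⊗[R] A) W))) := by
    intro W
    induction W using TensorProduct.induction_on with
    | zero => simp
    | add w₁ w₂ h₁ h₂ => simp only [map_add, h₁, h₂]
    | tmul u v =>
      simp only [TensorProduct.map_tmul, LinearMap.lTensor_tmul, conv_apply]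
  have nat : ∀ V : ((A ⊗[R] A) ⊗[R] (A ⊗[R] A)) ⊗[R] (A ⊗[R] A),
      LinearMap.mul' R A ((LinearMap.mul' R A).lTensor A
        (TensorProduct.map f (TensorProduct.map g h)
          ((TensorProduct.assoc R (A ⊗[R] A) (A ⊗[R] A) (A ⊗[R] A)) V)))
      = LinearMap.mul' R A ((LinearMap.mul' R A).rTensor A
          (TensorProduct.map (TensorProduct.map f g) h V)) := by
    intro V
    induction V using TensorProduct.induction_on with
    | zero => simp
    | add v₁ v₂ h₁ h₂ => simp only [map_add, h₁, h₂]
    | tmul uv w =>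
      induction uv using TensorProduct.induction_on with
      | zero => simp
      | add x₁ x₂ h₁ h₂ => simp only [map_add, add_tmul, h₁, h₂]
      | tmul u v => simp [mul_assoc]
  apply LinearMap.ext
  intro w
  rw [conv_apply, conv_apply, outerL, outerR, ← coassocC, nat]

/-- the convolution inverse candidate `a ⊗ b ↦ S b * S a` -/
def nuMap : A ⊗[R] A →ₗ[R] A :=
  LinearMap.mul' R A ∘ₗ
    TensorProduct.map (HopfAlgebra.antipode (R := R)) (HopfAlgebra.antipode (R := R)) ∘ₗ
    (TensorProduct.comm R A A).toLinearMap

lemma nuMap_tmul (a b : A) :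
    nuMap (R := R) (a ⊗ₜ b)
      = HopfAlgebra.antipode (R := R) b * HopfAlgebra.antipode (R := R) a := rfl

lemma conv_SmusMu :
    conv ((HopfAlgebra.antipode (R := R)) ∘ₗ LinearMap.mul' R A) (LinearMap.mul' R A)
      = convUnit := by
  apply TensorProduct.ext'
  intro a b
  have bridge : ∀ u v : A ⊗[R] A,
      LinearMap.mul' R A (TensorProduct.map
          ((HopfAlgebra.antipode (R := R)) ∘ₗ LinearMap.mul' R A) (LinearMap.mul' R A)
        (TensorProduct.tensorTensorTensorComm R A A A A (u ⊗ₜ v)))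
      = LinearMap.mul' R A ((HopfAlgebra.antipode (R := R)).rTensor A (u * v)) := by
    intro u v
    induction u using TensorProduct.induction_on with
    | zero => simp
    | add u₁ u₂ h₁ h₂ => simp only [map_add, add_tmul, add_mul, h₁, h₂]
    | tmul x y =>
      induction v using TensorProduct.induction_on with
      | zero => simp
      | add v₁ v₂ h₁ h₂ => simp only [map_add, tmul_add, mul_add, h₁, h₂]
      | tmul z w => simp [Algebra.TensorProduct.tmul_mul_tmul]
  rw [conv_apply, deltaC_tmul, bridge, ← Bialgebra.comul_mul,
    HopfAlgebra.mul_antipode_rTensor_comul_apply, convUnit_tmul]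

lemma mulRight_add' (a b : A) :
    LinearMap.mulRight R (a + b) = LinearMap.mulRight R a + LinearMap.mulRight R b :=
  LinearMap.ext fun x => mul_add x a b

lemma mulLeft_add' (a b : A) :
    LinearMap.mulLeft R (a + b) = LinearMap.mulLeft R a + LinearMap.mulLeft R b :=
  LinearMap.ext fun x => add_mul a b x

lemma conv_MuNu :
    conv (LinearMap.mul' R A) (nuMap (R := R)) = convUnit := by
  apply TensorProduct.ext'
  intro a b
  have bridge : ∀ u v : A ⊗[R] A,
      LinearMap.mul' R A (TensorProduct.map (LinearMap.mul' R A) (nuMap (R := R))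
        (TensorProduct.tensorTensorTensorComm R A A A A (u ⊗ₜ v)))
      = LinearMap.mul' R A (TensorProduct.map
          (LinearMap.mulRight R (LinearMap.mul' R A
            ((HopfAlgebra.antipode (R := R)).lTensor A v)))
          (HopfAlgebra.antipode (R := R)) u) := by
    intro u v
    induction u using TensorProduct.induction_on with
    | zero => simp
    | add u₁ u₂ h₁ h₂ => simp only [map_add, add_tmul, h₁, h₂]
    | tmul x y =>
      induction v using TensorProduct.induction_on with
      | zero => simp [LinearMap.mulRight_zero_eq_zero]
      | add v₁ v₂ h₁ h₂ =>
        simp only [map_add, tmul_add, h₁, h₂, mulRight_add', TensorProduct.map_add_left,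
          LinearMap.add_apply]
      | tmul z w => simp [nuMap_tmul, mul_assoc]
  have scal : ∀ (u : A ⊗[R] A) (r : R),
      LinearMap.mul' R A (TensorProduct.map (LinearMap.mulRight R (algebraMap R A r))
        (HopfAlgebra.antipode (R := R)) u)
      = r • LinearMap.mul' R A ((HopfAlgebra.antipode (R := R)).lTensor A u) := by
    intro u r
    induction u using TensorProduct.induction_on with
    | zero => simp
    | add u₁ u₂ h₁ h₂ => simp only [map_add, h₁, h₂, smul_add]
    | tmul x y =>
      simp only [TensorProduct.map_tmul, LinearMap.mul'_apply, LinearMap.mulRight_apply,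
        LinearMap.lTensor_tmul]
      rw [← Algebra.commutes, ← Algebra.smul_def, smul_mul_assoc]
  rw [conv_apply, deltaC_tmul, bridge, HopfAlgebra.mul_antipode_lTensor_comul_apply, scal,
    HopfAlgebra.mul_antipode_lTensor_comul_apply, convUnit_tmul, Bialgebra.counit_mul,
    Algebra.smul_def, ← map_mul, mul_comm]

lemma antipode_mul' (a b : A) :
    HopfAlgebra.antipode (R := R) (a * b)
      = HopfAlgebra.antipode (R := R) b * HopfAlgebra.antipode (R := R) a := by
  have key : (HopfAlgebra.antipode (R := R)) ∘ₗ LinearMap.mul' R A = nuMap (R := R) := by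
    calc (HopfAlgebra.antipode (R := R)) ∘ₗ LinearMap.mul' R A
        = conv ((HopfAlgebra.antipode (R := R)) ∘ₗ LinearMap.mul' R A) convUnit := by
          rw [conv_unit_right]
      _ = conv ((HopfAlgebra.antipode (R := R)) ∘ₗ LinearMap.mul' R A)
            (conv (LinearMap.mul' R A) (nuMap (R := R))) := by rw [conv_MuNu]
      _ = conv (conv ((HopfAlgebra.antipode (R := R)) ∘ₗ LinearMap.mul' R A)
            (LinearMap.mul' R A)) (nuMap (R := R)) := by rw [conv_assoc]
      _ = conv convUnit (nuMap (R := R)) := by rw [conv_SmusMu]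
      _ = nuMap (R := R) := conv_unit_left _
  have := LinearMap.congr_fun key (a ⊗ₜ[R] b)
  simpa [nuMap_tmul] using this

lemma antipode_one' : HopfAlgebra.antipode (R := R) (1 : A) = 1 := by
  have := HopfAlgebra.mul_antipode_rTensor_comul_apply (R := R) (a := (1 : A))
  simpa [Bialgebra.comul_one, Bialgebra.counit_one, Algebra.TensorProduct.one_def] using this

end AntipodeAntihom


/-! ### Tools for the twisted structure -/

section TwistTools

open Coalgebra LinearMap

-- basic `tmul` computations
lemma ins3_tmul (x y : H) : ins3 K H (x ⊗ₜ y) = x ⊗ₜ (y ⊗ₜ 1) := rfl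

lemma ins1_apply' (W : H ⊗[K] H) : ins1 K H W = 1 ⊗ₜ W := rfl

lemma comulRight_tmul (x y : H) :
    comulRight K H (x ⊗ₜ y) = x ⊗ₜ (Coalgebra.comul y) := rfl

lemma comulLeft_apply' (W : H ⊗[K] H) :
    comulLeft K H W = TensorProduct.assoc K H H H
      ((Coalgebra.comul (R := K) (A := H)).rTensor H W) := rfl

lemma counitLeft_tmul (x y : H) :
    counitLeft K H (x ⊗ₜ y) = Coalgebra.counit (R := K) x • y := rfl

lemma counitRight_tmul (x y : H) :
    counitRight K H (x ⊗ₜ y) = Coalgebra.counit (R := K) y • x := by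
  simp [counitRight, εH]

lemma chi_tmul (x y : H) : chi K H (x ⊗ₜ y) = x * SH K H y := by
  simp [chi, muH, SH]

lemma chiInv_tmul (x y : H) : chiInv K H (x ⊗ₜ y) = SH K H x * y := by
  simp [chiInv, muH, SH]

lemma chi_comul (a : H) :
    chi K H (Coalgebra.comul (R := K) a)
      = algebraMap K H (Coalgebra.counit (R := K) a) :=
  HopfAlgebra.mul_antipode_lTensor_comul_apply a

lemma chiInv_comul (a : H) :
    chiInv K H (Coalgebra.comul (R := K) a)
      = algebraMap K H (Coalgebra.counit (R := K) a) :=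
  HopfAlgebra.mul_antipode_rTensor_comul_apply a

lemma SH_one : SH K H 1 = 1 := antipode_one'

lemma SH_mul (a b : H) : SH K H (a * b) = SH K H b * SH K H a := antipode_mul' a b

lemma chi_one' : chi K H 1 = 1 := by
  rw [Algebra.TensorProduct.one_def, chi_tmul, SH_one, mul_one]

lemma chiInv_one' : chiInv K H 1 = 1 := by
  rw [Algebra.TensorProduct.one_def, chiInv_tmul, SH_one, one_mul]

lemma chi_add (X Y : H ⊗[K] H) : chi K H (X + Y) = chi K H X + chi K H Y := by
  simp [chi, map_add]

lemma chi_zero : chi K H 0 = 0 := by simp [chi]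

lemma chiInv_add (X Y : H ⊗[K] H) :
    chiInv K H (X + Y) = chiInv K H X + chiInv K H Y := by
  simp [chiInv, map_add]

lemma chiInv_zero : chiInv K H 0 = 0 := by simp [chiInv]

-- the associator is multiplicative
lemma assoc_eq_algAssoc (W : (H ⊗[K] H) ⊗[K] H) :
    (TensorProduct.assoc K H H H) W = Algebra.TensorProduct.assoc (R := K) (S := K) (T := K) (A := H) (C := H) (D := H) W := by
  induction W using TensorProduct.induction_on with
  | zero => simp
  | add w₁ w₂ h₁ h₂ => simp only [map_add, h₁, h₂]
  | tmul u z =>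
    induction u using TensorProduct.induction_on with
    | zero => simp
    | add u₁ u₂ h₁ h₂ => simp only [map_add, add_tmul, h₁, h₂]
    | tmul x y => rfl

lemma assoc_mul' (X Y : (H ⊗[K] H) ⊗[K] H) :
    (TensorProduct.assoc K H H H) (X * Y)
      = (TensorProduct.assoc K H H H) X * (TensorProduct.assoc K H H H) Y := by
  rw [assoc_eq_algAssoc, assoc_eq_algAssoc, assoc_eq_algAssoc, map_mul]

lemma assoc_tmul_one (W : H ⊗[K] H) :
    (TensorProduct.assoc K H H H) (W ⊗ₜ (1 : H)) = ins3 K H W := by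
  induction W using TensorProduct.induction_on with
  | zero => simp
  | add w₁ w₂ h₁ h₂ => simp only [add_tmul, map_add, h₁, h₂]
  | tmul x y => rfl

-- multiplicativity of the various structural maps
lemma ins3_mul (X Y : H ⊗[K] H) :
    ins3 K H (X * Y) = ins3 K H X * ins3 K H Y := by
  induction X using TensorProduct.induction_on with
  | zero => simp [zero_mul]
  | add x₁ x₂ h₁ h₂ => simp only [add_mul, map_add, h₁, h₂]
  | tmul x y =>
    induction Y using TensorProduct.induction_on with
    | zero => simp [mul_zero]
    | add y₁ y₂ h₁ h₂ => simp only [mul_add, map_add, h₁, h₂]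
    | tmul z w =>
      simp only [Algebra.TensorProduct.tmul_mul_tmul, ins3_tmul, one_mul]

lemma ins3_one : ins3 K H (1 : H ⊗[K] H) = 1 := by
  rw [Algebra.TensorProduct.one_def, ins3_tmul]
  rfl

lemma ins1_mul (X Y : H ⊗[K] H) :
    ins1 K H (X * Y) = ins1 K H X * ins1 K H Y := by
  simp only [ins1_apply', Algebra.TensorProduct.tmul_mul_tmul, one_mul]

lemma ins1_one : ins1 K H (1 : H ⊗[K] H) = 1 := by
  rw [ins1_apply']
  rfl

lemma comulRight_mul (X Y : H ⊗[K] H) :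
    comulRight K H (X * Y) = comulRight K H X * comulRight K H Y := by
  induction X using TensorProduct.induction_on with
  | zero => simp [zero_mul]
  | add x₁ x₂ h₁ h₂ => simp only [add_mul, map_add, h₁, h₂]
  | tmul x y =>
    induction Y using TensorProduct.induction_on with
    | zero => simp [mul_zero]
    | add y₁ y₂ h₁ h₂ => simp only [mul_add, map_add, h₁, h₂]
    | tmul z w =>
      simp only [Algebra.TensorProduct.tmul_mul_tmul, comulRight_tmul,
        Bialgebra.comul_mul]

lemma comulRight_one : comulRight K H (1 : H ⊗[K] H) = 1 := by
  rw [Algebra.TensorProduct.one_def, comulRight_tmul, Bialgebra.comul_one]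
  rfl

lemma comulLeft_mul (X Y : H ⊗[K] H) :
    comulLeft K H (X * Y) = comulLeft K H X * comulLeft K H Y := by
  induction X using TensorProduct.induction_on with
  | zero => simp [zero_mul]
  | add x₁ x₂ h₁ h₂ => simp only [add_mul, map_add, h₁, h₂]
  | tmul x y =>
    induction Y using TensorProduct.induction_on with
    | zero => simp [mul_zero]
    | add y₁ y₂ h₁ h₂ => simp only [mul_add, map_add, h₁, h₂]
    | tmul z w =>
      simp only [Algebra.TensorProduct.tmul_mul_tmul, comulLeft_apply',
        LinearMap.rTensor_tmul, Bialgebra.comul_mul]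
      rw [← assoc_mul', Algebra.TensorProduct.tmul_mul_tmul]

lemma comulLeft_one : comulLeft K H (1 : H ⊗[K] H) = 1 := by
  rw [Algebra.TensorProduct.one_def, comulLeft_apply']
  simp only [LinearMap.rTensor_tmul, Bialgebra.comul_one]
  rw [Algebra.TensorProduct.one_def, assoc_tmul_one, ins3_tmul]
  rfl

lemma counitLeft_mul (X Y : H ⊗[K] H) :
    counitLeft K H (X * Y) = counitLeft K H X * counitLeft K H Y := by
  induction X using TensorProduct.induction_on with
  | zero => simp [zero_mul]
  | add x₁ x₂ h₁ h₂ => simp only [add_mul, map_add, h₁, h₂, add_mul]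
  | tmul x y =>
    induction Y using TensorProduct.induction_on with
    | zero => simp [mul_zero]
    | add y₁ y₂ h₁ h₂ => simp only [mul_add, map_add, h₁, h₂, mul_add]
    | tmul z w =>
      simp only [Algebra.TensorProduct.tmul_mul_tmul, counitLeft_tmul,
        Bialgebra.counit_mul, smul_mul_smul_comm]

lemma counitLeft_one : counitLeft K H (1 : H ⊗[K] H) = 1 := by
  rw [Algebra.TensorProduct.one_def, counitLeft_tmul, Bialgebra.counit_one, one_smul]

lemma counitRight_mul (X Y : H ⊗[K] H) :
    counitRight K H (X * Y) = counitRight K H X * counitRight K H Y := by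
  induction X using TensorProduct.induction_on with
  | zero => simp [zero_mul]
  | add x₁ x₂ h₁ h₂ => simp only [add_mul, map_add, h₁, h₂, add_mul]
  | tmul x y =>
    induction Y using TensorProduct.induction_on with
    | zero => simp [mul_zero]
    | add y₁ y₂ h₁ h₂ => simp only [mul_add, map_add, h₁, h₂, mul_add]
    | tmul z w =>
      simp only [Algebra.TensorProduct.tmul_mul_tmul, counitRight_tmul,
        Bialgebra.counit_mul, smul_mul_smul_comm]

lemma counitRight_one : counitRight K H (1 : H ⊗[K] H) = 1 := by
  rw [Algebra.TensorProduct.one_def, counitRight_tmul, Bialgebra.counit_one, one_smul]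

-- counit laws
lemma counitLeft_comul (a : H) : counitLeft K H (ΔH K H a) = a := by
  simp only [counitLeft, ΔH, εH, LinearMap.comp_apply, LinearEquiv.coe_coe]
  rw [Coalgebra.rTensor_counit_comul]
  simp

lemma counitRight_comul (a : H) : counitRight K H (ΔH K H a) = a := by
  simp only [counitRight, ΔH, εH, LinearMap.comp_apply, LinearEquiv.coe_coe]
  rw [Coalgebra.lTensor_counit_comul]
  simp

lemma comulLeft_comul (a : H) :
    comulLeft K H (ΔH K H a) = comulRight K H (ΔH K H a) :=
  Coalgebra.coassoc_apply a

-- sandwich maps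
def sandR (c : H) : H ⊗[K] H →ₗ[K] H :=
  muH K H ∘ₗ TensorProduct.map (LinearMap.mulRight K c ∘ₗ SH K H) LinearMap.id

def sandL (c : H) : H ⊗[K] H →ₗ[K] H :=
  muH K H ∘ₗ TensorProduct.map LinearMap.id (LinearMap.mulLeft K c ∘ₗ SH K H)

lemma sandR_tmul (c x y : H) : sandR K H c (x ⊗ₜ y) = SH K H x * c * y := by
  simp [sandR, muH]

lemma sandL_tmul (c x y : H) : sandL K H c (x ⊗ₜ y) = x * (c * SH K H y) := by
  simp [sandL, muH]

lemma sandR_add (c₁ c₂ : H) (W : H ⊗[K] H) :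
    sandR K H (c₁ + c₂) W = sandR K H c₁ W + sandR K H c₂ W := by
  induction W using TensorProduct.induction_on with
  | zero => simp
  | add w₁ w₂ h₁ h₂ => simp only [map_add, h₁, h₂]; abel
  | tmul x y => simp only [sandR_tmul, mul_add, add_mul]

lemma sandL_add (c₁ c₂ : H) (W : H ⊗[K] H) :
    sandL K H (c₁ + c₂) W = sandL K H c₁ W + sandL K H c₂ W := by
  induction W using TensorProduct.induction_on with
  | zero => simp
  | add w₁ w₂ h₁ h₂ => simp only [map_add, h₁, h₂]; abel
  | tmul x y => simp only [sandL_tmul, mul_add, add_mul]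

lemma sandR_zero (W : H ⊗[K] H) : sandR K H 0 W = 0 := by
  induction W using TensorProduct.induction_on with
  | zero => simp
  | add w₁ w₂ h₁ h₂ => simp only [map_add, h₁, h₂, add_zero]
  | tmul x y => simp [sandR_tmul]

lemma sandL_zero (W : H ⊗[K] H) : sandL K H 0 W = 0 := by
  induction W using TensorProduct.induction_on with
  | zero => simp
  | add w₁ w₂ h₁ h₂ => simp only [map_add, h₁, h₂, add_zero]
  | tmul x y => simp [sandL_tmul]

lemma sandR_one' (W : H ⊗[K] H) :
    sandR K H 1 W = muH K H ((SH K H).rTensor H W) := by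
  induction W using TensorProduct.induction_on with
  | zero => simp
  | add w₁ w₂ h₁ h₂ => simp only [map_add, h₁, h₂]
  | tmul x y => simp [sandR_tmul, muH, SH]

lemma sandL_one' (W : H ⊗[K] H) :
    sandL K H 1 W = muH K H ((SH K H).lTensor H W) := by
  induction W using TensorProduct.induction_on with
  | zero => simp
  | add w₁ w₂ h₁ h₂ => simp only [map_add, h₁, h₂]
  | tmul x y => simp [sandL_tmul, muH, SH]

lemma sandR_algebraMap (r : K) (W : H ⊗[K] H) :
    sandR K H (algebraMap K H r) W = r • muH K H ((SH K H).rTensor H W) := by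
  induction W using TensorProduct.induction_on with
  | zero => simp
  | add w₁ w₂ h₁ h₂ => simp only [map_add, h₁, h₂, smul_add]
  | tmul x y =>
    simp only [sandR_tmul, muH, SH, LinearMap.rTensor_tmul, LinearMap.mul'_apply]
    rw [← Algebra.commutes, ← Algebra.smul_def, smul_mul_assoc]

lemma sandL_algebraMap (r : K) (W : H ⊗[K] H) :
    sandL K H (algebraMap K H r) W = r • muH K H ((SH K H).lTensor H W) := by
  induction W using TensorProduct.induction_on with
  | zero => simp
  | add w₁ w₂ h₁ h₂ => simp only [map_add, h₁, h₂, smul_add]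
  | tmul x y =>
    simp only [sandL_tmul, muH, SH, LinearMap.lTensor_tmul, LinearMap.mul'_apply]
    rw [← Algebra.smul_def, mul_smul_comm]

lemma sandR_comul (a : H) :
    sandR K H 1 (ΔH K H a) = algebraMap K H (εH K H a) := by
  rw [sandR_one']; exact HopfAlgebra.mul_antipode_rTensor_comul_apply a

lemma sandL_comul (a : H) :
    sandL K H 1 (ΔH K H a) = algebraMap K H (εH K H a) := by
  rw [sandL_one']; exact HopfAlgebra.mul_antipode_lTensor_comul_apply a

lemma chi_mul_rel (X Y : H ⊗[K] H) :
    chi K H (Y * X) = sandL K H (chi K H X) Y := by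
  induction X using TensorProduct.induction_on with
  | zero => simp [mul_zero, chi_zero, sandL_zero]
  | add x₁ x₂ h₁ h₂ => simp only [mul_add, chi_add, h₁, h₂, sandL_add]
  | tmul f g =>
    induction Y using TensorProduct.induction_on with
    | zero => simp [zero_mul, chi_zero]
    | add y₁ y₂ h₁ h₂ => simp only [add_mul, chi_add, map_add, h₁, h₂]
    | tmul u v =>
      simp only [Algebra.TensorProduct.tmul_mul_tmul, chi_tmul, sandL_tmul, SH,
        antipode_mul', mul_assoc]

lemma chiInv_mul_rel (X Y : H ⊗[K] H) :
    chiInv K H (Y * X) = sandR K H (chiInv K H Y) X := by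
  induction Y using TensorProduct.induction_on with
  | zero => simp [zero_mul, chiInv_zero, sandR_zero]
  | add y₁ y₂ h₁ h₂ => simp only [add_mul, chiInv_add, h₁, h₂, sandR_add]
  | tmul u v =>
    induction X using TensorProduct.induction_on with
    | zero => simp [mul_zero, chiInv_zero]
    | add x₁ x₂ h₁ h₂ => simp only [mul_add, chiInv_add, map_add, h₁, h₂]
    | tmul f g =>
      simp only [Algebra.TensorProduct.tmul_mul_tmul, chiInv_tmul, sandR_tmul, SH,
        antipode_mul', mul_assoc]

end TwistTools


section TwistMain

open Coalgebra LinearMap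

/-- `x ⊗ (y ⊗ z) ↦ x * (S y * z)` -/
def Tmap : H ⊗[K] (H ⊗[K] H) →ₗ[K] H :=
  muH K H ∘ₗ (muH K H ∘ₗ (SH K H).rTensor H).lTensor H

/-- `x ⊗ (y ⊗ z) ↦ S x * (y * S z)` -/
def Tmap' : H ⊗[K] (H ⊗[K] H) →ₗ[K] H :=
  muH K H ∘ₗ TensorProduct.map (SH K H) (muH K H ∘ₗ (SH K H).lTensor H)

lemma Tmap_tmul (x y z : H) :
    Tmap K H (x ⊗ₜ (y ⊗ₜ z)) = x * (SH K H y * z) := by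
  simp [Tmap, muH]

lemma Tmap'_tmul (x y z : H) :
    Tmap' K H (x ⊗ₜ (y ⊗ₜ z)) = SH K H x * (y * SH K H z) := by
  simp [Tmap', muH]

lemma T1 (X Y : H ⊗[K] H) :
    Tmap K H (ins1 K H Y * ins3 K H X) = chi K H X * chiInv K H Y := by
  induction X using TensorProduct.induction_on with
  | zero => simp [mul_zero, chi_zero]
  | add x₁ x₂ h₁ h₂ => simp only [map_add, mul_add, chi_add, add_mul, h₁, h₂]
  | tmul f g =>
    induction Y using TensorProduct.induction_on with
    | zero => simp [zero_mul, chiInv_zero]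
    | add y₁ y₂ h₁ h₂ => simp only [map_add, add_mul, chiInv_add, mul_add, h₁, h₂]
    | tmul u v =>
      rw [ins1_apply', ins3_tmul, Algebra.TensorProduct.tmul_mul_tmul,
        Algebra.TensorProduct.tmul_mul_tmul, one_mul, mul_one, Tmap_tmul,
        chi_tmul, chiInv_tmul, SH_mul]
      simp only [mul_assoc]

lemma T1' (X Y : H ⊗[K] H) :
    Tmap' K H (ins3 K H Y * ins1 K H X) = chiInv K H Y * chi K H X := by
  induction X using TensorProduct.induction_on with
  | zero => simp [mul_zero, chi_zero]
  | add x₁ x₂ h₁ h₂ => simp only [map_add, mul_add, chi_add, h₁, h₂]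
  | tmul f g =>
    induction Y using TensorProduct.induction_on with
    | zero => simp [zero_mul, chiInv_zero]
    | add y₁ y₂ h₁ h₂ => simp only [map_add, add_mul, chiInv_add, h₁, h₂]
    | tmul u v =>
      rw [ins1_apply', ins3_tmul, Algebra.TensorProduct.tmul_mul_tmul,
        Algebra.TensorProduct.tmul_mul_tmul, one_mul, mul_one, Tmap'_tmul,
        chi_tmul, chiInv_tmul]
      simp only [mul_assoc]

lemma T2inner (f g' : H) (P Q : H ⊗[K] H) :
    Tmap K H ((f ⊗ₜ Q) * (TensorProduct.assoc K H H H) (P ⊗ₜ g'))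
      = f * chi K H P * chiInv K H Q * g' := by
  induction P using TensorProduct.induction_on with
  | zero => simp [chi_zero]
  | add p₁ p₂ h₁ h₂ =>
    simp only [add_tmul, map_add, mul_add, chi_add, add_mul, h₁, h₂]
  | tmul u v =>
    induction Q using TensorProduct.induction_on with
    | zero => simp [chiInv_zero]
    | add q₁ q₂ h₁ h₂ =>
      simp only [tmul_add, map_add, add_mul, mul_add, chiInv_add, h₁, h₂]
    | tmul g₁ g₂ =>
      rw [assoc_tmul, Algebra.TensorProduct.tmul_mul_tmul,
        Algebra.TensorProduct.tmul_mul_tmul, Tmap_tmul, chi_tmul, chiInv_tmul,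
        SH_mul]
      simp only [mul_assoc]

lemma T2inner' (g f' : H) (P Q : H ⊗[K] H) :
    Tmap' K H ((TensorProduct.assoc K H H H) (P ⊗ₜ g) * (f' ⊗ₜ Q))
      = SH K H f' * chiInv K H P * chi K H Q * SH K H g := by
  induction P using TensorProduct.induction_on with
  | zero => simp [chiInv_zero]
  | add p₁ p₂ h₁ h₂ =>
    simp only [add_tmul, map_add, mul_add, chiInv_add, add_mul, h₁, h₂]
  | tmul f₁ f₂ =>
    induction Q using TensorProduct.induction_on with
    | zero => simp [chi_zero]
    | add q₁ q₂ h₁ h₂ =>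
      simp only [tmul_add, map_add, add_mul, mul_add, chi_add, h₁, h₂]
    | tmul g₁ g₂ =>
      rw [assoc_tmul, Algebra.TensorProduct.tmul_mul_tmul,
        Algebra.TensorProduct.tmul_mul_tmul, Tmap'_tmul, chi_tmul, chiInv_tmul,
        SH_mul, SH_mul]
      simp only [mul_assoc]

lemma smul_helper (r₁ r₂ : K) (f g' : H) :
    f * algebraMap K H r₁ * algebraMap K H r₂ * g' = (r₁ * r₂) • (f * g') := by
  rw [mul_assoc f, ← map_mul, ← Algebra.commutes, mul_assoc, ← Algebra.smul_def]

lemma T2full (X Y : H ⊗[K] H) :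
    Tmap K H (comulRight K H X * comulLeft K H Y)
      = counitRight K H X * counitLeft K H Y := by
  induction X using TensorProduct.induction_on with
  | zero => simp [zero_mul]
  | add x₁ x₂ h₁ h₂ => simp only [map_add, add_mul, h₁, h₂]
  | tmul f g =>
    induction Y using TensorProduct.induction_on with
    | zero => simp [mul_zero]
    | add y₁ y₂ h₁ h₂ => simp only [map_add, mul_add, h₁, h₂]
    | tmul u v =>
      rw [comulRight_tmul, comulLeft_apply', LinearMap.rTensor_tmul]
      have := T2inner K H f v (Coalgebra.comul u) (Coalgebra.comul g)
      rw [this, chi_comul, chiInv_comul, smul_helper, counitRight_tmul,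
        counitLeft_tmul, smul_mul_smul_comm,
        mul_comm (Coalgebra.counit (R := K) u) (Coalgebra.counit (R := K) g)]

lemma T2full' (X Y : H ⊗[K] H) :
    Tmap' K H (comulLeft K H X * comulRight K H Y)
      = SH K H (counitRight K H Y) * SH K H (counitLeft K H X) := by
  induction X using TensorProduct.induction_on with
  | zero => simp [zero_mul]
  | add x₁ x₂ h₁ h₂ => simp only [map_add, add_mul, mul_add, h₁, h₂]
  | tmul f g =>
    induction Y using TensorProduct.induction_on with
    | zero => simp [mul_zero]
    | add y₁ y₂ h₁ h₂ => simp only [map_add, mul_add, add_mul, h₁, h₂]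
    | tmul u v =>
      rw [comulRight_tmul, comulLeft_apply', LinearMap.rTensor_tmul]
      have := T2inner' K H g u (Coalgebra.comul f) (Coalgebra.comul v)
      rw [this, chi_comul, chiInv_comul]
      rw [counitRight_tmul, counitLeft_tmul, map_smul, map_smul,
        smul_helper, smul_mul_smul_comm,
        mul_comm (Coalgebra.counit (R := K) v) (Coalgebra.counit (R := K) f)]

lemma twistComul_apply (F Finv : H ⊗[K] H) (ξ : H) :
    twistComul K H F Finv ξ = F * (ΔH K H ξ * Finv) := rfl

lemma twistAntipode_apply (F Finv : H ⊗[K] H) (a : H) :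
    twistAntipode K H F Finv a = chi K H F * (SH K H a * chiInv K H Finv) := rfl

lemma ΔH_mul (a b : H) : ΔH K H (a * b) = ΔH K H a * ΔH K H b :=
  Bialgebra.comul_mul a b

lemma ΔH_one : ΔH K H 1 = 1 := by simp [ΔH]

lemma rTensor_twistComul (F Finv : H ⊗[K] H) (W : H ⊗[K] H) :
    (twistComul K H F Finv).rTensor H W
      = (F ⊗ₜ (1 : H)) * ((ΔH K H).rTensor H W) * (Finv ⊗ₜ (1 : H)) := by
  induction W using TensorProduct.induction_on with
  | zero => simp
  | add w₁ w₂ h₁ h₂ => simp only [map_add, mul_add, add_mul, h₁, h₂]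
  | tmul a b =>
    rw [LinearMap.rTensor_tmul, LinearMap.rTensor_tmul, twistComul_apply,
      Algebra.TensorProduct.tmul_mul_tmul, Algebra.TensorProduct.tmul_mul_tmul,
      one_mul, mul_one, mul_assoc]

lemma lTensor_twistComul (F Finv : H ⊗[K] H) (W : H ⊗[K] H) :
    (twistComul K H F Finv).lTensor H W
      = ((1 : H) ⊗ₜ F) * ((ΔH K H).lTensor H W) * ((1 : H) ⊗ₜ Finv) := by
  induction W using TensorProduct.induction_on with
  | zero => simp
  | add w₁ w₂ h₁ h₂ => simp only [map_add, mul_add, add_mul, h₁, h₂]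
  | tmul a b =>
    rw [LinearMap.lTensor_tmul, LinearMap.lTensor_tmul, twistComul_apply,
      Algebra.TensorProduct.tmul_mul_tmul, Algebra.TensorProduct.tmul_mul_tmul,
      one_mul, mul_one, mul_assoc]

lemma comulLeft_eq (W : H ⊗[K] H) :
    comulLeft K H W = TensorProduct.assoc K H H H ((ΔH K H).rTensor H W) := rfl

lemma comulRight_eq (W : H ⊗[K] H) :
    comulRight K H W = (ΔH K H).lTensor H W := rfl

lemma chiInv_rTensor (W : H ⊗[K] H) :
    muH K H ((SH K H).rTensor H W) = chiInv K H W := rfl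

lemma chi_lTensor (W : H ⊗[K] H) :
    muH K H ((SH K H).lTensor H W) = chi K H W := rfl

lemma antipodeR_sandwich (F Finv : H ⊗[K] H) (X W Y : H ⊗[K] H) :
    muH K H ((twistAntipode K H F Finv).rTensor H (X * (W * Y)))
      = chi K H F
        * sandR K H (sandR K H (sandR K H (chiInv K H Finv) X) W) Y := by
  induction X using TensorProduct.induction_on with
  | zero => simp [zero_mul, sandR_zero]
  | add x₁ x₂ h₁ h₂ =>
    simp only [add_mul, map_add, h₁, h₂, sandR_add, mul_add]
  | tmul f g =>
    induction W using TensorProduct.induction_on with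
    | zero => simp [zero_mul, mul_zero, sandR_zero]
    | add w₁ w₂ h₁ h₂ =>
      simp only [add_mul, mul_add, map_add, h₁, h₂, sandR_add]
    | tmul w₁ w₂ =>
      induction Y using TensorProduct.induction_on with
      | zero => simp [mul_zero, sandR_zero]
      | add y₁ y₂ h₁ h₂ =>
        simp only [mul_add, map_add, h₁, h₂, sandR_add]
      | tmul u v =>
        rw [Algebra.TensorProduct.tmul_mul_tmul, Algebra.TensorProduct.tmul_mul_tmul,
          LinearMap.rTensor_tmul, twistAntipode_apply]
        simp only [muH, LinearMap.mul'_apply, sandR_tmul, SH_mul, mul_assoc]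

lemma antipodeL_sandwich (F Finv : H ⊗[K] H) (X W Y : H ⊗[K] H) :
    muH K H ((twistAntipode K H F Finv).lTensor H (X * (W * Y)))
      = sandL K H (sandL K H (sandL K H (chi K H F) Y) W) X * chiInv K H Finv := by
  induction X using TensorProduct.induction_on with
  | zero => simp [zero_mul, sandL_zero]
  | add x₁ x₂ h₁ h₂ =>
    simp only [add_mul, map_add, h₁, h₂, add_mul]
  | tmul f g =>
    induction W using TensorProduct.induction_on with
    | zero => simp [zero_mul, mul_zero, sandL_zero]
    | add w₁ w₂ h₁ h₂ =>
      simp only [add_mul, mul_add, map_add, h₁, h₂, sandL_add, add_mul]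
    | tmul w₁ w₂ =>
      induction Y using TensorProduct.induction_on with
      | zero => simp [mul_zero, sandL_zero]
      | add y₁ y₂ h₁ h₂ =>
        simp only [mul_add, map_add, h₁, h₂, sandL_add, add_mul]
      | tmul u v =>
        rw [Algebra.TensorProduct.tmul_mul_tmul, Algebra.TensorProduct.tmul_mul_tmul,
          LinearMap.lTensor_tmul, twistAntipode_apply]
        simp only [muH, LinearMap.mul'_apply, sandL_tmul, SH_mul, mul_assoc]

end TwistMain


/-- the twisted structure `(H, μ, Δ^F, S^F, ε)` satisfies all the
Hopf algebra axioms (coassociativity, counit axioms, `Δ^F` and the counit are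
algebra maps, `χ` is invertible with inverse `χ⁻¹`, and `S^F` satisfies the
antipode axioms for `Δ^F`). -/
theorem twisted_hopf_algebra (F Finv : H ⊗[K] H) (hF : IsTwist K H F Finv) :
    -- coassociativity of Δ^F
    ((TensorProduct.assoc K H H H).toLinearMap ∘ₗ
        (twistComul K H F Finv).rTensor H ∘ₗ twistComul K H F Finv
      = (twistComul K H F Finv).lTensor H ∘ₗ twistComul K H F Finv)
    -- counit axioms for Δ^F (with the original counit ε)
    ∧ (counitLeft K H ∘ₗ twistComul K H F Finv = LinearMap.id)
    ∧ (counitRight K H ∘ₗ twistComul K H F Finv = LinearMap.id)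
    -- Δ^F is an algebra homomorphism
    ∧ (∀ ξ ζ : H, twistComul K H F Finv (ξ * ζ)
        = twistComul K H F Finv ξ * twistComul K H F Finv ζ)
    ∧ (twistComul K H F Finv 1 = 1)
    -- χ is invertible with inverse χ⁻¹
    ∧ (chi K H F * chiInv K H Finv = 1)
    ∧ (chiInv K H Finv * chi K H F = 1)
    -- antipode axioms for S^F
    ∧ (∀ ξ : H, muH K H ((twistAntipode K H F Finv).rTensor H (twistComul K H F Finv ξ))
        = algebraMap K H (εH K H ξ))
    ∧ (∀ ξ : H, muH K H ((twistAntipode K H F Finv).lTensor H (twistComul K H F Finv ξ))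
        = algebraMap K H (εH K H ξ)) := by
  obtain ⟨hmi, him, hco, hcl, hcr⟩ := hF
  have hclinv : counitLeft K H Finv = 1 := by
    have h := counitLeft_mul K H F Finv
    rw [hmi, counitLeft_one, hcl, one_mul] at h
    exact h.symm
  have hcrinv : counitRight K H Finv = 1 := by
    have h := counitRight_mul K H F Finv
    rw [hmi, counitRight_one, hcr, one_mul] at h
    exact h.symm
  -- the two cocycle rearrangements
  have rearr1 : ins1 K H Finv * ins3 K H F
      = comulRight K H F * comulLeft K H Finv := by
    calc ins1 K H Finv * ins3 K H F
        = ins1 K H Finv * ins3 K H F * (comulLeft K H F * comulLeft K H Finv) := by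
          rw [← comulLeft_mul, hmi, comulLeft_one, mul_one]
      _ = ins1 K H Finv * (ins3 K H F * comulLeft K H F) * comulLeft K H Finv := by
          simp only [mul_assoc]
      _ = ins1 K H Finv * (ins1 K H F * comulRight K H F) * comulLeft K H Finv := by
          rw [hco]
      _ = (ins1 K H Finv * ins1 K H F) * (comulRight K H F * comulLeft K H Finv) := by
          simp only [mul_assoc]
      _ = comulRight K H F * comulLeft K H Finv := by
          rw [← ins1_mul, him, ins1_one, one_mul]
  have rearr2 : ins3 K H Finv * ins1 K H F
      = comulLeft K H F * comulRight K H Finv := by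
    calc ins3 K H Finv * ins1 K H F
        = ins3 K H Finv * ins1 K H F * (comulRight K H F * comulRight K H Finv) := by
          rw [← comulRight_mul, hmi, comulRight_one, mul_one]
      _ = ins3 K H Finv * (ins1 K H F * comulRight K H F) * comulRight K H Finv := by
          simp only [mul_assoc]
      _ = ins3 K H Finv * (ins3 K H F * comulLeft K H F) * comulRight K H Finv := by
          rw [hco]
      _ = (ins3 K H Finv * ins3 K H F) * (comulLeft K H F * comulRight K H Finv) := by
          simp only [mul_assoc]
      _ = comulLeft K H F * comulRight K H Finv := by
          rw [← ins3_mul, him, ins3_one, one_mul]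
  -- invertibility of χ
  have hchi1 : chi K H F * chiInv K H Finv = 1 := by
    have e1 := T1 K H F Finv
    rw [rearr1, T2full, hcr, hclinv, one_mul] at e1
    exact e1.symm
  have hchi2 : chiInv K H Finv * chi K H F = 1 := by
    have e1 := T1' K H F Finv
    rw [rearr2, T2full', hcrinv, hcl, SH_one, one_mul] at e1
    exact e1.symm
  refine ⟨?_, ?_, ?_, ?_, ?_, hchi1, hchi2, ?_, ?_⟩
  · -- coassociativity
    apply LinearMap.ext
    intro ξ
    simp only [LinearMap.coe_comp, Function.comp_apply, LinearEquiv.coe_coe]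
    rw [rTensor_twistComul, lTensor_twistComul, assoc_mul', assoc_mul',
      assoc_tmul_one, assoc_tmul_one, ← comulLeft_eq, ← comulRight_eq,
      twistComul_apply, comulLeft_mul, comulLeft_mul, comulRight_mul,
      comulRight_mul, comulLeft_comul]
    simp only [← ins1_apply']
    simp only [← mul_assoc]
    rw [hco]
    have hba : (comulLeft K H Finv * ins3 K H Finv) * (ins3 K H F * comulLeft K H F)
        = 1 := by
      rw [mul_assoc (comulLeft K H Finv), ← mul_assoc (ins3 K H Finv), ← ins3_mul,
        him, ins3_one, one_mul, ← comulLeft_mul, him, comulLeft_one]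
    have hac : (ins3 K H F * comulLeft K H F)
        * (comulRight K H Finv * ins1 K H Finv) = 1 := by
      rw [hco, mul_assoc (ins1 K H F), ← mul_assoc (comulRight K H F),
        ← comulRight_mul, hmi, comulRight_one, one_mul, ← ins1_mul, hmi, ins1_one]
    have tail : comulLeft K H Finv * ins3 K H Finv
        = comulRight K H Finv * ins1 K H Finv := left_inv_eq_right_inv hba hac
    rw [mul_assoc _ (comulLeft K H Finv) (ins3 K H Finv), tail, ← mul_assoc]
  · -- left counit law
    apply LinearMap.ext
    intro ξ
    simp only [LinearMap.coe_comp, Function.comp_apply, LinearMap.id_coe, id_eq]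
    rw [twistComul_apply, counitLeft_mul, counitLeft_mul, hcl, counitLeft_comul,
      hclinv, one_mul, mul_one]
  · -- right counit law
    apply LinearMap.ext
    intro ξ
    simp only [LinearMap.coe_comp, Function.comp_apply, LinearMap.id_coe, id_eq]
    rw [twistComul_apply, counitRight_mul, counitRight_mul, hcr, counitRight_comul,
      hcrinv, one_mul, mul_one]
  · -- Δ^F multiplicative
    intro ξ ζ
    rw [twistComul_apply, twistComul_apply, twistComul_apply, ΔH_mul]
    simp only [mul_assoc]
    rw [← mul_assoc Finv F, him, one_mul]
  · -- Δ^F unital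
    rw [twistComul_apply, ΔH_one, one_mul, hmi]
  · -- left antipode law
    intro ξ
    rw [twistComul_apply, antipodeR_sandwich]
    have s1 : sandR K H (chiInv K H Finv) F = 1 := by
      rw [← chiInv_mul_rel, him, chiInv_one']
    rw [s1, sandR_comul, sandR_algebraMap, chiInv_rTensor, mul_smul_comm, hchi1,
      Algebra.algebraMap_eq_smul_one]
  · -- right antipode law
    intro ξ
    rw [twistComul_apply, antipodeL_sandwich]
    have s1 : sandL K H (chi K H F) Finv = 1 := by
      rw [← chi_mul_rel, him, chi_one']
    rw [s1, sandL_comul, sandL_algebraMap, chi_lTensor, smul_mul_assoc, hchi1,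
      Algebra.algebraMap_eq_smul_one]


end TwistPaper
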